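/- Suppose F = f + Ψ where f : ℝⁿ → ℝ is convex and L-smooth (L > 0) and Ψ : ℝⁿ → ℝ ∪ {+∞} is proper, closed and convex. If points x, z ∈ ℝⁿ satisfy −⟨G_{1/L}(z), x − z⟩ ≤ 0, then F(z̄) ≤ F(x) − (1/(2L))‖G_{1/L}(z)‖², where z̄ = z − G_{1/L}(z)/L. -/

import Mathlib

open scoped RealInnerProductSpace

lemma convex_gradient_ineq {n : ℕ} (f : EuclideanSpace ℝ (Fin n) → ℝ)
    (g z x : EuclideanSpace ℝ (Fin n))
    (hdiff : HasGradientAt f g z) (hconv : ConvexOn ℝ Set.univ f) :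
    f z + ⟪g, x - z⟫ ≤ f x := by
  set φ : ℝ → ℝ := fun s => f (z + s • (x - z)) with hφdef
  have hc : HasDerivAt (fun s : ℝ => z + s • (x - z)) (x - z) 0 := by
    simpa using ((hasDerivAt_id (0 : ℝ)).smul_const (x - z)).const_add z
  have hφ : HasDerivAt φ ⟪g, x - z⟫ 0 := by
    have hz0 : z + (0:ℝ) • (x - z) = z := by simp
    have h2 := (hz0 ▸ hdiff.hasFDerivAt).comp_hasDerivAt 0 hc
    exact h2
  have hslope : ∀ s ∈ Set.Ioo (0 : ℝ) 1, slope φ 0 s ≤ f x - f z := by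
    intro s hs
    have h1 : z + s • (x - z) = (1 - s) • z + s • x := by module
    have h2 : φ s ≤ (1 - s) * f z + s * f x := by
      have := hconv.2 (Set.mem_univ z) (Set.mem_univ x) (by linarith [hs.2] : (0:ℝ) ≤ 1 - s)
        hs.1.le (by ring)
      simpa [hφdef, h1, smul_eq_mul] using this
    have h0 : φ 0 = f z := by simp [hφdef]
    rw [slope_def_field, sub_zero, div_le_iff₀ hs.1]
    nlinarith [hs.1]
  have htend : Filter.Tendsto (slope φ 0) (nhdsWithin 0 (Set.Ioi 0)) (nhds ⟪g, x - z⟫) :=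
    (hasDerivAt_iff_tendsto_slope.1 hφ).mono_left
      (nhdsWithin_mono 0 fun a ha => ne_of_gt ha)
  have hle : ⟪g, x - z⟫ ≤ f x - f z := by
    refine le_of_tendsto htend ?_
    filter_upwards [Ioo_mem_nhdsGT_of_mem (Set.mem_Ico.2 ⟨le_refl 0, zero_lt_one⟩)] with s hs
    exact hslope s hs
  linarith

set_option maxHeartbeats 1000000 in
/-- sufficient decrease of the composite objective at the
forward-backward point `z̄` relative to `F(x)` under the sign condition. -/
theorem prox_gradient_sufficient_decrease {n : ℕ} (L : ℝ) (hL : 0 < L)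
    (f : EuclideanSpace ℝ (Fin n) → ℝ)
    (f' : EuclideanSpace ℝ (Fin n) → EuclideanSpace ℝ (Fin n))
    (hdiff : ∀ x, HasGradientAt f (f' x) x)
    (hfconvex : ConvexOn ℝ Set.univ f)
    (hsmooth : ∀ x y : EuclideanSpace ℝ (Fin n),
      |f x - f y - ⟪f' y, x - y⟫| ≤ L / 2 * ‖x - y‖ ^ 2)
    (Ψ : EuclideanSpace ℝ (Fin n) → EReal)
    (hproper : (∀ x, Ψ x ≠ ⊥) ∧ (∃ x, Ψ x ≠ ⊤))
    (hclosed : LowerSemicontinuous Ψ)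
    (hconvex : ∀ x y : EuclideanSpace ℝ (Fin n), ∀ a b : ℝ, 0 ≤ a → 0 ≤ b → a + b = 1 →
      Ψ (a • x + b • y) ≤ (a : EReal) * Ψ x + (b : EReal) * Ψ y)
    (prox : ℝ → EuclideanSpace ℝ (Fin n) → EuclideanSpace ℝ (Fin n))
    (hprox : ∀ t : ℝ, 0 < t → ∀ x z : EuclideanSpace ℝ (Fin n),
      Ψ (prox t x) + ((‖x - prox t x‖ ^ 2 / (2 * t) : ℝ) : EReal)
        ≤ Ψ z + ((‖x - z‖ ^ 2 / (2 * t) : ℝ) : EReal))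
    (F : EuclideanSpace ℝ (Fin n) → EReal)
    (hF : ∀ x, F x = (f x : EReal) + Ψ x)
    (G : ℝ → EuclideanSpace ℝ (Fin n) → EuclideanSpace ℝ (Fin n))
    (hG : ∀ t x, G t x = t⁻¹ • (x - prox t (x - t • f' x)))
    (x z : EuclideanSpace ℝ (Fin n))
    (hsign : -⟪G (1 / L) z, x - z⟫ ≤ 0) :
    F (z - (1 / L) • G (1 / L) z)
      ≤ F x - ((1 / (2 * L) * ‖G (1 / L) z‖ ^ 2 : ℝ) : EReal) := by
  obtain ⟨hbot, x₀, hx₀⟩ := hproper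
  have ht : (0:ℝ) < 1 / L := by positivity
  set g := G (1 / L) z with hgdef
  set w := z - (1 / L) • f' z with hwdef
  set p := prox (1 / L) w with hpdef
  have hzp : z - p = (1 / L) • g := by
    rw [hgdef, hG, ← hwdef, ← hpdef, smul_inv_smul₀ (ne_of_gt ht)]
  have hzbar : z - (1 / L) • g = p := by rw [← hzp]; abel
  -- Ψ p is finite
  have hprox1 := hprox (1/L) ht w x₀
  rw [← hpdef] at hprox1
  obtain ⟨ψ0, hψ0⟩ : ∃ r : ℝ, Ψ x₀ = r := ⟨_, (EReal.coe_toReal hx₀ (hbot x₀)).symm⟩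
  rw [hψ0, ← EReal.coe_add] at hprox1
  have hpne : Ψ p ≠ ⊤ := by
    intro h
    rw [h, EReal.top_add_of_ne_bot (EReal.coe_ne_bot _), top_le_iff] at hprox1
    exact EReal.coe_ne_top _ hprox1
  obtain ⟨ψp, hψp⟩ : ∃ r : ℝ, Ψ p = r := ⟨_, (EReal.coe_toReal hpne (hbot p)).symm⟩
  by_cases hxt : Ψ x = ⊤
  · rw [hF x, hxt, EReal.add_top_of_ne_bot (EReal.coe_ne_bot _), EReal.top_sub_coe]
    exact le_top
  obtain ⟨ψx, hψx⟩ : ∃ r : ℝ, Ψ x = r := ⟨_, (EReal.coe_toReal hxt (hbot x)).symm⟩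
  rw [hzbar, hF p, hF x, hψp, hψx, ← EReal.coe_add, ← EReal.coe_add, ← EReal.coe_sub,
    EReal.coe_le_coe_iff]
  -- prox subgradient inequality (real form)
  have hkey : ∀ lam : ℝ, 0 < lam → lam ≤ 1 →
      ψp + L * ⟪w - p, x - p⟫ ≤ ψx + lam * (L * ‖x - p‖^2 / 2) := by
    intro lam h0 h1
    set u := p + lam • (x - p) with hu
    have hcvx := hconvex p x (1 - lam) lam (by linarith) h0.le (by ring)
    have huu : (1 - lam) • p + lam • x = u := by rw [hu]; module
    rw [huu, hψp, hψx, ← EReal.coe_mul, ← EReal.coe_mul, ← EReal.coe_add] at hcvx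
    have hune : Ψ u ≠ ⊤ := ne_top_of_le_ne_top (EReal.coe_ne_top _) hcvx
    obtain ⟨ψu, hψu⟩ : ∃ r : ℝ, Ψ u = r := ⟨_, (EReal.coe_toReal hune (hbot u)).symm⟩
    rw [hψu, EReal.coe_le_coe_iff] at hcvx
    have hprox2 := hprox (1/L) ht w u
    rw [← hpdef, hψp, hψu, ← EReal.coe_add, ← EReal.coe_add, EReal.coe_le_coe_iff] at hprox2
    have h2t : ∀ r : ℝ, r / (2 * (1/L)) = r * L / 2 := by
      intro r; field_simp
    rw [h2t, h2t] at hprox2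
    have hwu : w - u = (w - p) - lam • (x - p) := by rw [hu]; abel
    have hexp : ‖w - u‖^2 = ‖w - p‖^2 - 2 * lam * ⟪w - p, x - p⟫ + lam^2 * ‖x - p‖^2 := by
      rw [hwu, norm_sub_sq_real, real_inner_smul_right, norm_smul]
      rw [Real.norm_eq_abs, abs_of_pos h0]
      ring
    have h3 : lam * (ψp + L * ⟪w - p, x - p⟫) ≤ lam * (ψx + lam * (L * ‖x - p‖^2 / 2)) := by
      nlinarith [hprox2, hcvx, hexp]
    exact le_of_mul_le_mul_left h3 h0
  have hsub : ψp + L * ⟪w - p, x - p⟫ ≤ ψx := by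
    refine le_of_forall_pos_le_add ?_
    intro ε hε
    set c := L * ‖x - p‖^2 / 2 with hc
    have hc0 : 0 ≤ c := by positivity
    have h0 : 0 < min 1 (ε / (c + 1)) := lt_min one_pos (by positivity)
    have h1 : min 1 (ε / (c + 1)) ≤ 1 := min_le_left _ _
    have := hkey _ h0 h1
    have h2 : min 1 (ε / (c + 1)) * c ≤ ε := by
      have h3 : min 1 (ε / (c + 1)) ≤ ε / (c + 1) := min_le_right _ _
      have h4 : ε / (c + 1) * c ≤ ε := by
        rw [div_mul_eq_mul_div, div_le_iff₀ (by linarith : (0:ℝ) < c + 1)]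
        nlinarith
      nlinarith
    linarith
  -- smoothness and convexity facts
  have hA : f p - f z - ⟪f' z, p - z⟫ ≤ L/2 * ‖p - z‖^2 :=
    le_trans (le_abs_self _) (hsmooth p z)
  have hB := convex_gradient_ineq f (f' z) z x (hdiff z) hfconvex
  -- inner product algebra
  have hpz : p - z = -((1/L) • g) := by rw [← hzp]; abel
  have hwp : w - p = (1/L) • g - (1/L) • f' z := by
    rw [hwdef, ← hzp]; abel
  have hxp : x - p = (x - z) + (1/L) • g := by rw [← hzp]; abel
  have hinner : ⟪w - p, x - p⟫ = (1/L) * ⟪g, x - z⟫ + (1/L)^2 * ‖g‖^2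
      - (1/L) * ⟪f' z, x - z⟫ - (1/L)^2 * ⟪f' z, g⟫ := by
    rw [hwp, hxp]
    simp only [inner_sub_left, inner_add_right, real_inner_smul_left, real_inner_smul_right,
      real_inner_self_eq_norm_sq]
    rw [real_inner_comm g (f' z), norm_smul, Real.norm_eq_abs,
      abs_of_pos ht]
    ring
  have hinner2 : ⟪f' z, p - z⟫ = -((1/L) * ⟪f' z, g⟫) := by
    rw [hpz, inner_neg_right, real_inner_smul_right]
  have hnorm : ‖p - z‖^2 = (1/L)^2 * ‖g‖^2 := by
    rw [hpz, norm_neg, norm_smul, Real.norm_eq_abs, abs_of_pos ht]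
    ring
  have hsign' : 0 ≤ ⟪g, x - z⟫ := by linarith [hsign]
  have h4 : L * ⟪w - p, x - p⟫ = ⟪g, x - z⟫ + (1/L) * ‖g‖^2 - ⟪f' z, x - z⟫
      - (1/L) * ⟪f' z, g⟫ := by
    rw [hinner]; field_simp
  have e1 : L/2 * ((1/L)^2 * ‖g‖^2) = 1/(2*L) * ‖g‖^2 := by
    field_simp
  have hinv : (1:ℝ)/L = 2 * (1/(2*L)) := by field_simp
  nlinarith [hA, hB, hsub, h4, e1, hinv, hsign', hinner2, hnorm, sq_nonneg ‖g‖]
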